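/- Let E be a finite dimensional complex normed vector space and let U ⊆ E be an open, bounded, convex neighborhood of 0 which is circled, i.e. for every x ∈ U and θ ∈ ℝ one has e^{iθ} x ∈ U. Define N'(ℓ) := sup_{x ∈ U} |ℓ(x)| for linear functionals ℓ on E, and N(x) := sup{ |ℓ(x)| : ℓ linear functional on E with N'(ℓ) ≤ 1 } for x ∈ E. Then N is a norm on E and U coincides with its open unit ball: U = { x ∈ E : N(x) < 1 }. -/

import Mathlib

/-- The dual "norm" `N'(ℓ) = sup_{x ∈ U} |ℓ(x)|` of a linear functional `ℓ`,
associated to a subset `U` of `E`. -/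
noncomputable def dualGauge {E : Type*} [NormedAddCommGroup E] [NormedSpace ℂ E]
    (U : Set E) (ℓ : E →ₗ[ℂ] ℂ) : ℝ :=
  ⨆ x : U, ‖ℓ (x : E)‖

/-- The bidual gauge `N(x) = sup { |ℓ(x)| : ℓ linear functional with N'(ℓ) ≤ 1 }`. -/
noncomputable def bidualGauge {E : Type*} [NormedAddCommGroup E] [NormedSpace ℂ E]
    (U : Set E) (x : E) : ℝ :=
  ⨆ ℓ : {ℓ : E →ₗ[ℂ] ℂ // dualGauge U ℓ ≤ 1}, ‖(ℓ : E →ₗ[ℂ] ℂ) x‖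

open Complex Set Bornology

namespace Stmt10Aux

variable {E : Type*} [NormedAddCommGroup E] [NormedSpace ℂ E] {U : Set E}

/-- small positive real multiples of `x` lie in an open set containing 0. -/
lemma exists_smul_mem (hUo : IsOpen U) (h0 : (0:E) ∈ U) (x : E) :
    ∃ ε : ℝ, 0 < ε ∧ ε • x ∈ U := by
  have hc : ContinuousAt (fun t : ℝ => t • x) 0 :=
    ((continuous_id.smul continuous_const : Continuous fun t : ℝ => t • x)).continuousAt
  have h : ∀ᶠ t : ℝ in nhds 0, t • x ∈ U := by
    apply hc.eventually_mem
    simpa using hUo.mem_nhds h0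
  rcases Metric.eventually_nhds_iff.mp h with ⟨ε, hε, hb⟩
  refine ⟨ε/2, by positivity, hb ?_⟩
  rw [Real.dist_eq, sub_zero, abs_of_pos (by positivity)]
  linarith

/-- if `x ∈ U` open, then some multiple `r • x` with `r > 1` is also in `U`. -/
lemma exists_one_lt_smul_mem (hUo : IsOpen U) {x : E} (hx : x ∈ U) :
    ∃ r : ℝ, 1 < r ∧ r • x ∈ U := by
  have hc : ContinuousAt (fun t : ℝ => t • x) 1 :=
    ((continuous_id.smul continuous_const : Continuous fun t : ℝ => t • x)).continuousAt
  have h : ∀ᶠ t : ℝ in nhds 1, t • x ∈ U := by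
    apply hc.eventually_mem
    simpa using hUo.mem_nhds hx
  rcases Metric.eventually_nhds_iff.mp h with ⟨ε, hε, hb⟩
  refine ⟨1 + ε/2, by linarith, hb ?_⟩
  rw [Real.dist_eq]
  rw [show 1 + ε/2 - 1 = ε/2 by ring, abs_of_pos (by positivity)]
  linarith

lemma dualGauge_bddAbove [FiniteDimensional ℂ E] (hUb : IsBounded U) (ℓ : E →ₗ[ℂ] ℂ) :
    BddAbove (Set.range fun x : U => ‖ℓ (x : E)‖) := by
  obtain ⟨R, hR⟩ := isBounded_iff_forall_norm_le.mp hUb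
  refine ⟨‖LinearMap.toContinuousLinearMap ℓ‖ * R, ?_⟩
  rintro - ⟨⟨x, hx⟩, rfl⟩
  calc ‖ℓ x‖ = ‖LinearMap.toContinuousLinearMap ℓ x‖ := by simp
    _ ≤ ‖LinearMap.toContinuousLinearMap ℓ‖ * ‖x‖ :=
        (LinearMap.toContinuousLinearMap ℓ).le_opNorm x
    _ ≤ ‖LinearMap.toContinuousLinearMap ℓ‖ * R := by
        exact mul_le_mul_of_nonneg_left (hR x hx) (norm_nonneg _)

lemma norm_apply_le_one [FiniteDimensional ℂ E] (hUb : IsBounded U) {ℓ : E →ₗ[ℂ] ℂ}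
    (hℓ : dualGauge U ℓ ≤ 1) {a : E} (ha : a ∈ U) : ‖ℓ a‖ ≤ 1 :=
  le_trans (le_ciSup (dualGauge_bddAbove hUb ℓ) (⟨a, ha⟩ : U)) hℓ

lemma dualGauge_zero (h0 : (0:E) ∈ U) : dualGauge U (0 : E →ₗ[ℂ] ℂ) ≤ 1 := by
  haveI : Nonempty U := ⟨⟨0, h0⟩⟩
  unfold dualGauge
  simp

lemma bidual_bddAbove [FiniteDimensional ℂ E] (hUo : IsOpen U) (hUb : IsBounded U)
    (h0 : (0:E) ∈ U) (x : E) :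
    BddAbove (Set.range fun ℓ : {ℓ : E →ₗ[ℂ] ℂ // dualGauge U ℓ ≤ 1} =>
      ‖(ℓ : E →ₗ[ℂ] ℂ) x‖) := by
  obtain ⟨ε, hε, hεx⟩ := exists_smul_mem hUo h0 x
  refine ⟨ε⁻¹, ?_⟩
  rintro - ⟨⟨ℓ, hℓ⟩, rfl⟩
  have h1 : ‖ℓ (ε • x)‖ ≤ 1 := norm_apply_le_one hUb hℓ hεx
  rw [← Complex.coe_smul, map_smul, smul_eq_mul, norm_mul, Complex.norm_real,
    Real.norm_eq_abs, abs_of_pos hε] at h1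
  rw [← mul_le_mul_iff_right₀ hε, mul_inv_cancel₀ (ne_of_gt hε)]
  exact h1

end Stmt10Aux

open Stmt10Aux in
/-- For an open, bounded, convex, circled neighborhood `U` of `0` in a
finite dimensional complex normed space `E`, the function `N = bidualGauge U` is a norm
on `E` and `U` is exactly its open unit ball. -/
theorem stmt10 {E : Type*} [NormedAddCommGroup E] [NormedSpace ℂ E]
    [FiniteDimensional ℂ E]
    (U : Set E) (hUo : IsOpen U) (hUb : Bornology.IsBounded U) (hUc : Convex ℝ U)
    (h0 : (0 : E) ∈ U)
    (hcirc : ∀ x ∈ U, ∀ θ : ℝ, Complex.exp (θ * Complex.I) • x ∈ U) :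
    ((∀ x : E, bidualGauge U x = 0 → x = 0) ∧
      (∀ (c : ℂ) (x : E), bidualGauge U (c • x) = ‖c‖ * bidualGauge U x) ∧
      (∀ x y : E, bidualGauge U (x + y) ≤ bidualGauge U x + bidualGauge U y)) ∧
    U = {x : E | bidualGauge U x < 1} := by
  haveI : Nonempty U := ⟨⟨0, h0⟩⟩
  haveI hA : Nonempty {ℓ : E →ₗ[ℂ] ℂ // dualGauge U ℓ ≤ 1} := ⟨⟨0, dualGauge_zero h0⟩⟩
  -- homogeneity
  have hhom : ∀ (c : ℂ) (x : E), bidualGauge U (c • x) = ‖c‖ * bidualGauge U x := by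
    intro c x
    unfold bidualGauge
    rw [Real.mul_iSup_of_nonneg (norm_nonneg c)]
    exact iSup_congr fun ℓ => by rw [map_smul, smul_eq_mul, norm_mul]
  -- N ≤ 1 on U
  have hle1 : ∀ a ∈ U, bidualGauge U a ≤ 1 := fun a ha =>
    ciSup_le fun ℓ => norm_apply_le_one hUb ℓ.2 ha
  -- 1 ≤ N outside U
  have hnotin : ∀ x : E, x ∉ U → 1 ≤ bidualGauge U x := by
    intro x hx
    obtain ⟨f, hfx, hf⟩ := RCLike.separate_convex_open_set (𝕜 := ℂ) h0 hUc hUo hx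
    have hadm : dualGauge U (f : E →ₗ[ℂ] ℂ) ≤ 1 := by
      refine ciSup_le fun a => ?_
      obtain ⟨a, ha⟩ := a
      simp only [ContinuousLinearMap.coe_coe]
      set z := f a with hz
      have h1 : Complex.exp ((-z.arg : ℝ) * Complex.I) • a ∈ U := hcirc a ha _
      have h2 := hf _ h1
      rw [map_smul, smul_eq_mul, ← hz] at h2
      have h3 : Complex.exp ((-z.arg : ℝ) * Complex.I) * z = (‖z‖ : ℂ) := by
        have h := Complex.norm_mul_exp_arg_mul_I z
        calc Complex.exp ((-z.arg : ℝ) * Complex.I) * z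
            = Complex.exp ((-z.arg : ℝ) * Complex.I) *
              ((‖z‖ : ℂ) * Complex.exp (z.arg * Complex.I)) := by rw [h]
          _ = (‖z‖ : ℂ) *
              Complex.exp (((-z.arg : ℝ) : ℂ) * Complex.I + (z.arg : ℂ) * Complex.I) := by
                rw [Complex.exp_add]; ring
          _ = (‖z‖ : ℂ) := by
                rw [show ((-z.arg : ℝ) : ℂ) * Complex.I + (z.arg : ℂ) * Complex.I = 0 by
                  push_cast; ring, Complex.exp_zero, mul_one]
      rw [h3] at h2
      simp only [RCLike.re_to_complex, Complex.ofReal_re] at h2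
      exact h2.le
    calc (1:ℝ) = RCLike.re (f x) := hfx.symm
      _ ≤ ‖f x‖ := by
          simp only [RCLike.re_to_complex]
          exact Complex.re_le_norm _
      _ = ‖((⟨(f : E →ₗ[ℂ] ℂ), hadm⟩ : {ℓ : E →ₗ[ℂ] ℂ // dualGauge U ℓ ≤ 1}) :
            E →ₗ[ℂ] ℂ) x‖ := by simp
      _ ≤ bidualGauge U x := le_ciSup (bidual_bddAbove hUo hUb h0 x) _
  -- N < 1 on U
  have hmemlt : ∀ x ∈ U, bidualGauge U x < 1 := by
    intro x hx
    obtain ⟨r, hr, hrx⟩ := exists_one_lt_smul_mem hUo hx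
    have hr0 : (0:ℝ) < r := lt_trans one_pos hr
    have key : bidualGauge U (r • x) ≤ 1 := hle1 _ hrx
    have : bidualGauge U x = r⁻¹ * bidualGauge U (r • x) := by
      rw [← Complex.coe_smul, hhom]
      rw [Complex.norm_real, Real.norm_eq_abs, abs_of_pos hr0, ← mul_assoc,
        inv_mul_cancel₀ (ne_of_gt hr0), one_mul]
    rw [this]
    calc r⁻¹ * bidualGauge U (r • x) ≤ r⁻¹ * 1 := by
          exact mul_le_mul_of_nonneg_left key (by positivity)
      _ < 1 := by rw [mul_one]; exact inv_lt_one_of_one_lt₀ hr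
  refine ⟨⟨?_, hhom, ?_⟩, ?_⟩
  · -- definiteness
    intro x hx
    by_contra hx0
    obtain ⟨R, hR⟩ := isBounded_iff_forall_norm_le.mp hUb
    have hxn : (0:ℝ) < ‖x‖ := norm_pos_iff.mpr hx0
    have hR0 : (0:ℝ) ≤ R := le_trans (norm_nonneg x) (hR x ?hx1)
    case hx1 =>
      by_contra hxu
      exact absurd hx (by linarith [hnotin x hxu])
    set s : ℝ := (R + 1) / ‖x‖ with hs
    have hs0 : 0 < s := by positivity
    have hsx : s • x ∉ U := by
      intro hmem
      have := hR _ hmem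
      rw [norm_smul, Real.norm_eq_abs, abs_of_pos hs0, hs, div_mul_cancel₀ _ (ne_of_gt hxn)]
        at this
      linarith
    have h1 := hnotin _ hsx
    rw [← Complex.coe_smul, hhom, hx, mul_zero] at h1
    linarith
  · -- triangle inequality
    intro x y
    refine ciSup_le fun ℓ => ?_
    calc ‖(ℓ : E →ₗ[ℂ] ℂ) (x + y)‖ ≤ ‖(ℓ : E →ₗ[ℂ] ℂ) x‖ + ‖(ℓ : E →ₗ[ℂ] ℂ) y‖ := by
          rw [map_add]; exact norm_add_le _ _
      _ ≤ bidualGauge U x + bidualGauge U y :=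
          add_le_add (le_ciSup (bidual_bddAbove hUo hUb h0 x) ℓ)
            (le_ciSup (bidual_bddAbove hUo hUb h0 y) ℓ)
  · -- unit ball
    ext x
    simp only [Set.mem_setOf_eq]
    exact ⟨hmemlt x, fun h => by_contra fun hx => absurd h (not_lt.mpr (hnotin x hx))⟩
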